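/- Main error estimate (Proposition 4.1): if (u_1,...,u_m) is a C² minimizer of the segregation energy satisfying Δû_l ≤ f_l(·,u_l) everywhere, Δu_l = f_l(·,u_l) on {u_l > 0}, and (u_h^1,...,u_h^m) is a solution of the finite difference system with the same boundary values, where each f_l(z,·) is nondecreasing, then for every l, ‖u_l − u_h^l‖_{L∞(Ω_h)} ≤ C_Ω · ∑_{l=1}^m ‖L_h u_l − Δu_l‖_{L∞(Ω)}, with a constant C_Ω = a² depending only on the domain Ω = (0,a)². -/

import Mathlib

/-- Continuous Laplacian of a function on `ℝ²`, as the sum of pure second derivatives. -/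
noncomputable def Lap2 (v : ℝ × ℝ → ℝ) (p : ℝ × ℝ) : ℝ :=
  iteratedDeriv 2 (fun t => v (t, p.2)) p.1 + iteratedDeriv 2 (fun t => v (p.1, t)) p.2

/-- 5-point stencil Laplacian with step `h`, for functions on `ℝ²`. -/
noncomputable def LhC (h : ℝ) (v : ℝ × ℝ → ℝ) (p : ℝ × ℝ) : ℝ :=
  (v (p.1 - h, p.2) + v (p.1 + h, p.2) - 4 * v p + v (p.1, p.2 - h) + v (p.1, p.2 + h)) / h ^ 2

/-- The 5-point discrete Laplacian on grid functions (mesh size `h`). -/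
noncomputable def dLap (h : ℝ) (v : ℤ × ℤ → ℝ) (z : ℤ × ℤ) : ℝ :=
  (v (z.1 - 1, z.2) + v (z.1 + 1, z.2) - 4 * v z + v (z.1, z.2 - 1) + v (z.1, z.2 + 1)) / h ^ 2

/-- A point of the uniform grid `{0,...,N}²`. -/
def onGrid (N : ℕ) (z : ℤ × ℤ) : Prop := 0 ≤ z.1 ∧ z.1 ≤ N ∧ 0 ≤ z.2 ∧ z.2 ≤ N

/-- An interior point of the uniform grid `{0,...,N}²`. -/
def inGrid (N : ℕ) (z : ℤ × ℤ) : Prop :=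
  1 ≤ z.1 ∧ z.1 ≤ (N : ℤ) - 1 ∧ 1 ≤ z.2 ∧ z.2 ≤ (N : ℤ) - 1

/- ## Auxiliary definitions -/

noncomputable def gridPt (h : ℝ) (z : ℤ × ℤ) : ℝ × ℝ := ((z.1 : ℝ) * h, (z.2 : ℝ) * h)

noncomputable def barrier (a h : ℝ) (z : ℤ × ℤ) : ℝ := ((z.1:ℝ)*h) * (a - (z.1:ℝ)*h) / 2

/- ## Basic calculus lemmas -/

lemma iter2_zero (x : ℝ) : iteratedDeriv 2 (fun _ : ℝ => (0:ℝ)) x = 0 := by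
  simp [iteratedDeriv_eq_iterate]

lemma iter2_add (f g : ℝ → ℝ) (hf : ContDiff ℝ 2 f) (hg : ContDiff ℝ 2 g) (x : ℝ) :
    iteratedDeriv 2 (fun t => f t + g t) x = iteratedDeriv 2 f x + iteratedDeriv 2 g x := by
  rw [← iteratedDerivWithin_univ, ← iteratedDerivWithin_univ, ← iteratedDerivWithin_univ]
  exact iteratedDerivWithin_add (Set.mem_univ x) uniqueDiffOn_univ hf.contDiffWithinAt hg.contDiffWithinAt

lemma iter2_sub (f g : ℝ → ℝ) (hf : ContDiff ℝ 2 f) (hg : ContDiff ℝ 2 g) (x : ℝ) :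
    iteratedDeriv 2 (fun t => f t - g t) x = iteratedDeriv 2 f x - iteratedDeriv 2 g x := by
  rw [← iteratedDerivWithin_univ, ← iteratedDerivWithin_univ, ← iteratedDerivWithin_univ]
  exact iteratedDerivWithin_sub (Set.mem_univ x) uniqueDiffOn_univ hf.contDiffWithinAt hg.contDiffWithinAt

lemma iter2_sum {ι : Type*} (s : Finset ι) (w : ι → ℝ → ℝ) (hw : ∀ i ∈ s, ContDiff ℝ 2 (w i))
    (x : ℝ) : iteratedDeriv 2 (fun t => ∑ i ∈ s, w i t) x = ∑ i ∈ s, iteratedDeriv 2 (w i) x := by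
  classical
  induction s using Finset.induction_on with
  | empty => simpa using iter2_zero x
  | insert c s' hns ih =>
    rw [Finset.sum_insert hns]
    have : (fun t => ∑ i ∈ insert c s', w i t) = fun t => w c t + ∑ i ∈ s', w i t := by
      funext t; rw [Finset.sum_insert hns]
    rw [this, iter2_add _ _ (hw c (Finset.mem_insert_self c s'))
      (ContDiff.sum fun i hi => hw i (Finset.mem_insert_of_mem hi)),
      ih fun i hi => hw i (Finset.mem_insert_of_mem hi)]

lemma slice1 (v : ℝ × ℝ → ℝ) (hv : ContDiff ℝ 2 v) (c : ℝ) :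
    ContDiff ℝ 2 (fun t : ℝ => v (t, c)) := hv.comp (contDiff_id.prodMk contDiff_const)

lemma slice2 (v : ℝ × ℝ → ℝ) (hv : ContDiff ℝ 2 v) (c : ℝ) :
    ContDiff ℝ 2 (fun t : ℝ => v (c, t)) := hv.comp (contDiff_const.prodMk contDiff_id)

lemma Lap2_sub_sum {ι : Type*} (v : ℝ × ℝ → ℝ) (s : Finset ι) (w : ι → ℝ × ℝ → ℝ)
    (hv : ContDiff ℝ 2 v) (hw : ∀ i ∈ s, ContDiff ℝ 2 (w i)) (p : ℝ × ℝ) :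
    Lap2 (fun q => v q - ∑ i ∈ s, w i q) p = Lap2 v p - ∑ i ∈ s, Lap2 (w i) p := by
  have hsum1 : ContDiff ℝ 2 (fun t : ℝ => ∑ i ∈ s, w i (t, p.2)) :=
    ContDiff.sum fun i hi => slice1 _ (hw i hi) _
  have hsum2 : ContDiff ℝ 2 (fun t : ℝ => ∑ i ∈ s, w i (p.1, t)) :=
    ContDiff.sum fun i hi => slice2 _ (hw i hi) _
  simp only [Lap2]
  rw [iter2_sub _ _ (slice1 v hv p.2) hsum1, iter2_sub _ _ (slice2 v hv p.1) hsum2,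
    iter2_sum _ _ (fun i hi => slice1 _ (hw i hi) _),
    iter2_sum _ _ (fun i hi => slice2 _ (hw i hi) _), Finset.sum_add_distrib]
  ring

lemma Lap2_zero (x : ℝ × ℝ) : Lap2 (fun _ => (0:ℝ)) x = 0 := by
  simp only [Lap2, iter2_zero]; ring

lemma Lap2_congr_ball (v w : ℝ × ℝ → ℝ) (x₀ : ℝ × ℝ) (δ : ℝ) (hδ : 0 < δ)
    (hvw : ∀ y ∈ Metric.ball x₀ δ, v y = w y) : Lap2 v x₀ = Lap2 w x₀ := by
  have m1 : ∀ t : ℝ, dist t x₀.1 < δ → (t, x₀.2) ∈ Metric.ball x₀ δ := by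
    intro t ht
    simp only [Metric.mem_ball, Prod.dist_eq, dist_self]
    exact max_lt ht hδ
  have m2 : ∀ t : ℝ, dist t x₀.2 < δ → (x₀.1, t) ∈ Metric.ball x₀ δ := by
    intro t ht
    simp only [Metric.mem_ball, Prod.dist_eq, dist_self]
    exact max_lt hδ ht
  have h1 : (fun t => v (t, x₀.2)) =ᶠ[nhds x₀.1] (fun t => w (t, x₀.2)) :=
    Metric.eventually_nhds_iff.mpr ⟨δ, hδ, fun {t} ht => hvw _ (m1 t ht)⟩
  have h2 : (fun t => v (x₀.1, t)) =ᶠ[nhds x₀.2] (fun t => w (x₀.1, t)) :=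
    Metric.eventually_nhds_iff.mpr ⟨δ, hδ, fun {t} ht => hvw _ (m2 t ht)⟩
  simp only [Lap2, h1.iteratedDeriv_eq 2, h2.iteratedDeriv_eq 2]

/- ## Discrete lemmas -/

lemma LhC_sub_sum {ι : Type*} (h : ℝ) (v : ℝ × ℝ → ℝ) (s : Finset ι) (w : ι → ℝ × ℝ → ℝ)
    (p : ℝ × ℝ) :
    LhC h (fun q => v q - ∑ i ∈ s, w i q) p = LhC h v p - ∑ i ∈ s, LhC h (w i) p := by
  simp only [LhC]
  rw [← Finset.sum_div, div_sub_div_same]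
  congr 1
  simp only [Finset.sum_add_distrib, Finset.sum_sub_distrib, ← Finset.mul_sum]
  ring

lemma dLap_comb (h : ℝ) (A B C : ℤ × ℤ → ℝ) (c : ℝ) (z : ℤ × ℤ) :
    dLap h (fun w => A w - B w - c * C w) z = dLap h A z - dLap h B z - c * dLap h C z := by
  simp only [dLap]
  ring

lemma dLap_barrier (a h : ℝ) (hh : h ≠ 0) (z : ℤ × ℤ) : dLap h (barrier a h) z = -1 := by
  simp only [dLap, barrier]
  push_cast
  field_simp
  ring

lemma dLap_grid (h : ℝ) (v : ℝ × ℝ → ℝ) (z : ℤ × ℤ) :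
    dLap h (fun w => v (gridPt h w)) z = LhC h v (gridPt h z) := by
  have e1 : ((z.1 - 1 : ℤ) : ℝ) * h = (z.1:ℝ)*h - h := by push_cast; ring
  have e2 : ((z.1 + 1 : ℤ) : ℝ) * h = (z.1:ℝ)*h + h := by push_cast; ring
  have e3 : ((z.2 - 1 : ℤ) : ℝ) * h = (z.2:ℝ)*h - h := by push_cast; ring
  have e4 : ((z.2 + 1 : ℤ) : ℝ) * h = (z.2:ℝ)*h + h := by push_cast; ring
  simp only [dLap, LhC, gridPt, e1, e2, e3, e4]

lemma dLap_nonpos_at_max (h : ℝ) (v : ℤ × ℤ → ℝ) (z : ℤ × ℤ)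
    (h1 : v (z.1 - 1, z.2) ≤ v z) (h2 : v (z.1 + 1, z.2) ≤ v z)
    (h3 : v (z.1, z.2 - 1) ≤ v z) (h4 : v (z.1, z.2 + 1) ≤ v z) :
    dLap h v z ≤ 0 := by
  have : v (z.1 - 1, z.2) + v (z.1 + 1, z.2) - 4 * v z + v (z.1, z.2 - 1) + v (z.1, z.2 + 1) ≤ 0 := by
    linarith
  exact div_nonpos_iff.mpr (Or.inr ⟨this, sq_nonneg h⟩)

/- ## Grid geometry -/

lemma onGrid_of_inGrid {N : ℕ} {z : ℤ × ℤ} (hz : inGrid N z) : onGrid N z := by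
  obtain ⟨h1, h2, h3, h4⟩ := hz
  exact ⟨by omega, by omega, by omega, by omega⟩

lemma nb1_onGrid {N : ℕ} {z : ℤ × ℤ} (hz : inGrid N z) : onGrid N (z.1 - 1, z.2) := by
  obtain ⟨h1, h2, h3, h4⟩ := hz; exact ⟨by omega, by omega, by omega, by omega⟩
lemma nb2_onGrid {N : ℕ} {z : ℤ × ℤ} (hz : inGrid N z) : onGrid N (z.1 + 1, z.2) := by
  obtain ⟨h1, h2, h3, h4⟩ := hz; exact ⟨by omega, by omega, by omega, by omega⟩
lemma nb3_onGrid {N : ℕ} {z : ℤ × ℤ} (hz : inGrid N z) : onGrid N (z.1, z.2 - 1) := by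
  obtain ⟨h1, h2, h3, h4⟩ := hz; exact ⟨by omega, by omega, by omega, by omega⟩
lemma nb4_onGrid {N : ℕ} {z : ℤ × ℤ} (hz : inGrid N z) : onGrid N (z.1, z.2 + 1) := by
  obtain ⟨h1, h2, h3, h4⟩ := hz; exact ⟨by omega, by omega, by omega, by omega⟩

lemma gridPt_mem_Icc {N : ℕ} {a h : ℝ} (hh : 0 < h) (hha : (N:ℝ) * h = a) {z : ℤ × ℤ}
    (hz : onGrid N z) : gridPt h z ∈ Set.Icc (0:ℝ) a ×ˢ Set.Icc (0:ℝ) a := by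
  obtain ⟨h1, h2, h3, h4⟩ := hz
  have c1 : (0:ℝ) ≤ (z.1:ℝ) := by exact_mod_cast h1
  have c2 : (z.1:ℝ) ≤ (N:ℝ) := by exact_mod_cast h2
  have c3 : (0:ℝ) ≤ (z.2:ℝ) := by exact_mod_cast h3
  have c4 : (z.2:ℝ) ≤ (N:ℝ) := by exact_mod_cast h4
  simp only [gridPt, Set.mem_prod, Set.mem_Icc]
  refine ⟨⟨by positivity, ?_⟩, by positivity, ?_⟩
  · rw [← hha]; nlinarith
  · rw [← hha]; nlinarith

lemma gridPt_mem_Ioo {N : ℕ} {a h : ℝ} (hh : 0 < h) (hha : (N:ℝ) * h = a) {z : ℤ × ℤ}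
    (hz : inGrid N z) : gridPt h z ∈ Set.Ioo (0:ℝ) a ×ˢ Set.Ioo (0:ℝ) a := by
  obtain ⟨h1, h2, h3, h4⟩ := hz
  have c1 : (1:ℝ) ≤ (z.1:ℝ) := by exact_mod_cast h1
  have c2 : (z.1:ℝ) ≤ (N:ℝ) - 1 := by
    have : ((z.1:ℤ):ℝ) ≤ (((N:ℤ) - 1 : ℤ) : ℝ) := by exact_mod_cast h2
    push_cast at this; linarith
  have c3 : (1:ℝ) ≤ (z.2:ℝ) := by exact_mod_cast h3
  have c4 : (z.2:ℝ) ≤ (N:ℝ) - 1 := by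
    have : ((z.2:ℤ):ℝ) ≤ (((N:ℤ) - 1 : ℤ) : ℝ) := by exact_mod_cast h4
    push_cast at this; linarith
  simp only [gridPt, Set.mem_prod, Set.mem_Ioo]
  refine ⟨⟨by nlinarith, ?_⟩, by nlinarith, ?_⟩
  · rw [← hha]; nlinarith
  · rw [← hha]; nlinarith

lemma barrier_nonneg {N : ℕ} {a h : ℝ} (hh : 0 < h) (hha : (N:ℝ) * h = a) {z : ℤ × ℤ}
    (hz : onGrid N z) : 0 ≤ barrier a h z := by
  obtain ⟨h1, h2, _, _⟩ := hz
  have c1 : (0:ℝ) ≤ (z.1:ℝ) := by exact_mod_cast h1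
  have c2 : (z.1:ℝ) ≤ (N:ℝ) := by exact_mod_cast h2
  have : (z.1:ℝ) * h ≤ a := by rw [← hha]; nlinarith
  have : 0 ≤ (z.1:ℝ) * h := by positivity
  simp only [barrier]
  nlinarith

lemma barrier_le {N : ℕ} {a h : ℝ} (hh : 0 < h) (hha : (N:ℝ) * h = a) {z : ℤ × ℤ}
    (hz : onGrid N z) : barrier a h z ≤ a^2 / 8 := by
  simp only [barrier]
  nlinarith [sq_nonneg ((z.1:ℝ) * h - a / 2)]

/- ## Core maximum-principle contradiction lemmas -/

lemma coreA {m N : ℕ} {a h ε : ℝ} (hh : 0 < h) (hha : (N:ℝ) * h = a)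
    (f : Fin m → ℝ × ℝ → ℝ → ℝ) (hfmono : ∀ l p, Monotone (f l p))
    (u : Fin m → ℝ × ℝ → ℝ) (hC2 : ∀ l, ContDiff ℝ 2 (u l))
    (hupos : ∀ l p, p ∈ Set.Icc (0:ℝ) a ×ˢ Set.Icc (0:ℝ) a → 0 ≤ u l p)
    (huseg : ∀ p q : Fin m, ∀ x, x ∈ Set.Icc (0:ℝ) a ×ˢ Set.Icc (0:ℝ) a →
      p ≠ q → u p x * u q x = 0)
    (uhat : Fin m → ℝ × ℝ → ℝ)
    (huhat : ∀ l p, uhat l p = u l p - ∑ q ∈ Finset.univ.erase l, u q p)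
    (heqlap : ∀ l p, p ∈ Set.Ioo (0:ℝ) a ×ˢ Set.Ioo (0:ℝ) a → 0 < u l p →
      Lap2 (u l) p = f l p (u l p))
    (uh : Fin m → ℤ × ℤ → ℝ)
    (huhpos : ∀ l z, onGrid N z → 0 ≤ uh l z)
    (huhseg : ∀ p q : Fin m, ∀ z, onGrid N z → p ≠ q → uh p z * uh q z = 0)
    (uhhat : Fin m → ℤ × ℤ → ℝ)
    (huhhat : ∀ l z, uhhat l z = uh l z - ∑ q ∈ Finset.univ.erase l, uh q z)
    (hdsub : ∀ l z, inGrid N z →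
      dLap h (uhhat l) z ≤ f l (z.1 * h, z.2 * h) (uh l z))
    (K : Fin m → ℝ)
    (hK : ∀ l p, p ∈ Set.Ioo (0:ℝ) a ×ˢ Set.Ioo (0:ℝ) a →
      |LhC h (u l) p - Lap2 (u l) p| ≤ K l)
    (hε : 0 < ε) (l : Fin m) (z₀ : ℤ × ℤ) (hin : inGrid N z₀)
    (hu : 0 < u l (gridPt h z₀))
    (hge : uhhat l z₀ ≤ uhat l (gridPt h z₀))
    (hmax : ∀ z, onGrid N z →
      uhat l (gridPt h z) - uhhat l z - (∑ l', K l' + ε) * barrier a h z ≤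
      uhat l (gridPt h z₀) - uhhat l z₀ - (∑ l', K l' + ε) * barrier a h z₀) : False := by
  classical
  set S : ℝ := ∑ l', K l' with hS
  set x₀ : ℝ × ℝ := gridPt h z₀ with hx₀def
  have hongrid₀ : onGrid N z₀ := onGrid_of_inGrid hin
  have hx₀ : x₀ ∈ Set.Ioo (0:ℝ) a ×ˢ Set.Ioo (0:ℝ) a := gridPt_mem_Ioo hh hha hin
  have hIooIcc : Set.Ioo (0:ℝ) a ×ˢ Set.Ioo (0:ℝ) a ⊆ Set.Icc (0:ℝ) a ×ˢ Set.Icc (0:ℝ) a :=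
    Set.prod_mono Set.Ioo_subset_Icc_self Set.Ioo_subset_Icc_self
  -- discrete maximum principle
  have hd0 : dLap h (fun z => uhat l (gridPt h z) - uhhat l z - (S + ε) * barrier a h z) z₀ ≤ 0 :=
    dLap_nonpos_at_max h _ z₀ (hmax _ (nb1_onGrid hin)) (hmax _ (nb2_onGrid hin))
      (hmax _ (nb3_onGrid hin)) (hmax _ (nb4_onGrid hin))
  rw [dLap_comb, dLap_grid, dLap_barrier a h hh.ne'] at hd0
  -- hd0 : LhC h (uhat l) x₀ - dLap h (uhhat l) z₀ - (S+ε) * (-1) ≤ 0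
  -- ball of positivity
  have hopen : IsOpen ((Set.Ioo (0:ℝ) a ×ˢ Set.Ioo (0:ℝ) a) ∩ {y | 0 < u l y}) :=
    (isOpen_Ioo.prod isOpen_Ioo).inter (isOpen_lt continuous_const (hC2 l).continuous)
  obtain ⟨δ, hδ, hball⟩ := Metric.isOpen_iff.mp hopen x₀ ⟨hx₀, hu⟩
  have hvan : ∀ q, q ≠ l → ∀ y ∈ Metric.ball x₀ δ, u q y = 0 := by
    intro q hq y hy
    have h1 := huseg q l y (hIooIcc (hball hy).1) hq
    exact (mul_eq_zero.mp h1).resolve_right (ne_of_gt (hball hy).2)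
  have hlapzero : ∀ q, q ≠ l → Lap2 (u q) x₀ = 0 := fun q hq => by
    rw [Lap2_congr_ball (u q) (fun _ => 0) x₀ δ hδ (fun y hy => hvan q hq y hy)]
    exact Lap2_zero x₀
  have hhatlap : Lap2 (uhat l) x₀ = Lap2 (u l) x₀ :=
    Lap2_congr_ball _ _ x₀ δ hδ (fun y hy => by
      rw [huhat, Finset.sum_eq_zero fun q hq => hvan q (Finset.ne_of_mem_erase hq) y hy, sub_zero])
  have hdecomp : LhC h (uhat l) x₀ = LhC h (u l) x₀ - ∑ q ∈ Finset.univ.erase l, LhC h (u q) x₀ := by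
    rw [show uhat l = fun p => u l p - ∑ q ∈ Finset.univ.erase l, u q p from funext (huhat l)]
    exact LhC_sub_sum h (u l) _ _ x₀
  have hKl := abs_le.mp (hK l x₀ hx₀)
  have hsumLhC : ∑ q ∈ Finset.univ.erase l, LhC h (u q) x₀ ≤ ∑ q ∈ Finset.univ.erase l, K q := by
    refine Finset.sum_le_sum fun q hq => ?_
    have := (abs_le.mp (hK q x₀ hx₀)).2
    rw [hlapzero q (Finset.ne_of_mem_erase hq)] at this
    linarith
  have hsK : ∑ q ∈ Finset.univ.erase l, K q + K l = S := Finset.sum_erase_add _ _ (Finset.mem_univ l)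
  have hlow : Lap2 (u l) x₀ - S ≤ LhC h (uhat l) x₀ := by
    rw [hdecomp]; linarith [hKl.1]
  have heq2 : Lap2 (u l) x₀ = f l x₀ (u l x₀) := heqlap l x₀ hx₀ hu
  have hd2 : dLap h (uhhat l) z₀ ≤ f l x₀ (uh l z₀) := hdsub l z₀ hin
  have hulele : uh l z₀ ≤ u l x₀ := by
    rcases (huhpos l z₀ hongrid₀).lt_or_eq with hpos | hzero
    · have hseg : ∀ q ∈ Finset.univ.erase l, uh q z₀ = 0 := fun q hq =>
        (mul_eq_zero.mp (huhseg q l z₀ hongrid₀ (Finset.ne_of_mem_erase hq))).resolve_right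
          (ne_of_gt hpos)
      have he1 : uhhat l z₀ = uh l z₀ := by
        rw [huhhat, Finset.sum_eq_zero hseg, sub_zero]
      have he2 : uhat l x₀ ≤ u l x₀ := by
        rw [huhat]
        have : 0 ≤ ∑ q ∈ Finset.univ.erase l, u q x₀ :=
          Finset.sum_nonneg fun q _ => hupos q x₀ (hIooIcc hx₀)
        linarith
      linarith
    · rw [← hzero]; exact hupos l x₀ (hIooIcc hx₀)
  have hmono : f l x₀ (uh l z₀) ≤ f l x₀ (u l x₀) := hfmono l x₀ hulele
  linarith

lemma coreA' {m N : ℕ} {a h ε : ℝ} (hh : 0 < h) (hha : (N:ℝ) * h = a)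
    (f : Fin m → ℝ × ℝ → ℝ → ℝ) (hfmono : ∀ l p, Monotone (f l p))
    (u : Fin m → ℝ × ℝ → ℝ) (hC2 : ∀ l, ContDiff ℝ 2 (u l))
    (hupos : ∀ l p, p ∈ Set.Icc (0:ℝ) a ×ˢ Set.Icc (0:ℝ) a → 0 ≤ u l p)
    (huseg : ∀ p q : Fin m, ∀ x, x ∈ Set.Icc (0:ℝ) a ×ˢ Set.Icc (0:ℝ) a →
      p ≠ q → u p x * u q x = 0)
    (uhat : Fin m → ℝ × ℝ → ℝ)
    (huhat : ∀ l p, uhat l p = u l p - ∑ q ∈ Finset.univ.erase l, u q p)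
    (hsublap : ∀ l p, p ∈ Set.Ioo (0:ℝ) a ×ˢ Set.Ioo (0:ℝ) a →
      Lap2 (uhat l) p ≤ f l p (u l p))
    (uh : Fin m → ℤ × ℤ → ℝ)
    (huhseg : ∀ p q : Fin m, ∀ z, onGrid N z → p ≠ q → uh p z * uh q z = 0)
    (uhhat : Fin m → ℤ × ℤ → ℝ)
    (huhhat : ∀ l z, uhhat l z = uh l z - ∑ q ∈ Finset.univ.erase l, uh q z)
    (hdeq : ∀ l z, inGrid N z → 0 < uh l z →
      dLap h (uhhat l) z = f l (z.1 * h, z.2 * h) (uh l z))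
    (K : Fin m → ℝ)
    (hK : ∀ l p, p ∈ Set.Ioo (0:ℝ) a ×ˢ Set.Ioo (0:ℝ) a →
      |LhC h (u l) p - Lap2 (u l) p| ≤ K l)
    (hε : 0 < ε) (l : Fin m) (z₀ : ℤ × ℤ) (hin : inGrid N z₀)
    (huhp : 0 < uh l z₀)
    (hge : uhat l (gridPt h z₀) ≤ uhhat l z₀)
    (hmax : ∀ z, onGrid N z →
      uhhat l z - uhat l (gridPt h z) - (∑ l', K l' + ε) * barrier a h z ≤
      uhhat l z₀ - uhat l (gridPt h z₀) - (∑ l', K l' + ε) * barrier a h z₀) : False := by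
  classical
  set S : ℝ := ∑ l', K l' with hS
  set x₀ : ℝ × ℝ := gridPt h z₀ with hx₀def
  have hongrid₀ : onGrid N z₀ := onGrid_of_inGrid hin
  have hx₀ : x₀ ∈ Set.Ioo (0:ℝ) a ×ˢ Set.Ioo (0:ℝ) a := gridPt_mem_Ioo hh hha hin
  have hIooIcc : Set.Ioo (0:ℝ) a ×ˢ Set.Ioo (0:ℝ) a ⊆ Set.Icc (0:ℝ) a ×ˢ Set.Icc (0:ℝ) a :=
    Set.prod_mono Set.Ioo_subset_Icc_self Set.Ioo_subset_Icc_self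
  have hd0 : dLap h (fun z => uhhat l z - uhat l (gridPt h z) - (S + ε) * barrier a h z) z₀ ≤ 0 :=
    dLap_nonpos_at_max h _ z₀ (hmax _ (nb1_onGrid hin)) (hmax _ (nb2_onGrid hin))
      (hmax _ (nb3_onGrid hin)) (hmax _ (nb4_onGrid hin))
  rw [dLap_comb, dLap_grid, dLap_barrier a h hh.ne'] at hd0
  -- hd0 : dLap h (uhhat l) z₀ - LhC h (uhat l) x₀ - (S+ε) * (-1) ≤ 0
  have hB : dLap h (uhhat l) z₀ = f l x₀ (uh l z₀) := hdeq l z₀ hin huhp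
  have hdecomp : LhC h (uhat l) x₀ = LhC h (u l) x₀ - ∑ q ∈ Finset.univ.erase l, LhC h (u q) x₀ := by
    rw [show uhat l = fun p => u l p - ∑ q ∈ Finset.univ.erase l, u q p from funext (huhat l)]
    exact LhC_sub_sum h (u l) _ _ x₀
  have hlapdecomp : Lap2 (uhat l) x₀ =
      Lap2 (u l) x₀ - ∑ q ∈ Finset.univ.erase l, Lap2 (u q) x₀ := by
    rw [show uhat l = fun p => u l p - ∑ q ∈ Finset.univ.erase l, u q p from funext (huhat l)]
    exact Lap2_sub_sum (u l) _ _ (hC2 l) (fun q _ => hC2 q) x₀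
  have hKl := abs_le.mp (hK l x₀ hx₀)
  have hs : ∑ q ∈ Finset.univ.erase l, (Lap2 (u q) x₀ - LhC h (u q) x₀) ≤
      ∑ q ∈ Finset.univ.erase l, K q := by
    refine Finset.sum_le_sum fun q _ => ?_
    have := (abs_le.mp (hK q x₀ hx₀)).1
    linarith
  rw [Finset.sum_sub_distrib] at hs
  have hsK : ∑ q ∈ Finset.univ.erase l, K q + K l = S := Finset.sum_erase_add _ _ (Finset.mem_univ l)
  have hup : LhC h (uhat l) x₀ ≤ Lap2 (uhat l) x₀ + S := by
    rw [hdecomp, hlapdecomp]; linarith [hKl.2]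
  have hsub : Lap2 (uhat l) x₀ ≤ f l x₀ (u l x₀) := hsublap l x₀ hx₀
  have hseg : ∀ q ∈ Finset.univ.erase l, uh q z₀ = 0 := fun q hq =>
    (mul_eq_zero.mp (huhseg q l z₀ hongrid₀ (Finset.ne_of_mem_erase hq))).resolve_right
      (ne_of_gt huhp)
  have he1 : uhhat l z₀ = uh l z₀ := by rw [huhhat, Finset.sum_eq_zero hseg, sub_zero]
  have hulele : u l x₀ ≤ uh l z₀ := by
    rcases (hupos l x₀ (hIooIcc hx₀)).lt_or_eq with hpos | hzero
    · have hcseg : ∀ q ∈ Finset.univ.erase l, u q x₀ = 0 := fun q hq =>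
        (mul_eq_zero.mp (huseg q l x₀ (hIooIcc hx₀) (Finset.ne_of_mem_erase hq))).resolve_right
          (ne_of_gt hpos)
      have : uhat l x₀ = u l x₀ := by rw [huhat, Finset.sum_eq_zero hcseg, sub_zero]
      linarith
    · rw [← hzero]; linarith
  have hmono : f l x₀ (u l x₀) ≤ f l x₀ (uh l z₀) := hfmono l x₀ hulele
  linarith

lemma keybound {m N : ℕ} {a h ε : ℝ} (ha : 0 < a) (hh : 0 < h) (hha : (N:ℝ) * h = a)
    (f : Fin m → ℝ × ℝ → ℝ → ℝ) (hfmono : ∀ l p, Monotone (f l p))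
    (u : Fin m → ℝ × ℝ → ℝ) (hC2 : ∀ l, ContDiff ℝ 2 (u l))
    (hupos : ∀ l p, p ∈ Set.Icc (0:ℝ) a ×ˢ Set.Icc (0:ℝ) a → 0 ≤ u l p)
    (huseg : ∀ p q : Fin m, ∀ x, x ∈ Set.Icc (0:ℝ) a ×ˢ Set.Icc (0:ℝ) a →
      p ≠ q → u p x * u q x = 0)
    (uhat : Fin m → ℝ × ℝ → ℝ)
    (huhat : ∀ l p, uhat l p = u l p - ∑ q ∈ Finset.univ.erase l, u q p)
    (hsublap : ∀ l p, p ∈ Set.Ioo (0:ℝ) a ×ˢ Set.Ioo (0:ℝ) a →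
      Lap2 (uhat l) p ≤ f l p (u l p))
    (heqlap : ∀ l p, p ∈ Set.Ioo (0:ℝ) a ×ˢ Set.Ioo (0:ℝ) a → 0 < u l p →
      Lap2 (u l) p = f l p (u l p))
    (uh : Fin m → ℤ × ℤ → ℝ)
    (huhpos : ∀ l z, onGrid N z → 0 ≤ uh l z)
    (huhseg : ∀ p q : Fin m, ∀ z, onGrid N z → p ≠ q → uh p z * uh q z = 0)
    (hbdry : ∀ l z, onGrid N z → ¬inGrid N z → uh l z = u l (z.1 * h, z.2 * h))
    (uhhat : Fin m → ℤ × ℤ → ℝ)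
    (huhhat : ∀ l z, uhhat l z = uh l z - ∑ q ∈ Finset.univ.erase l, uh q z)
    (hdsub : ∀ l z, inGrid N z →
      dLap h (uhhat l) z ≤ f l (z.1 * h, z.2 * h) (uh l z))
    (hdeq : ∀ l z, inGrid N z → 0 < uh l z →
      dLap h (uhhat l) z = f l (z.1 * h, z.2 * h) (uh l z))
    (K : Fin m → ℝ)
    (hK : ∀ l p, p ∈ Set.Ioo (0:ℝ) a ×ˢ Set.Ioo (0:ℝ) a →
      |LhC h (u l) p - Lap2 (u l) p| ≤ K l)
    (hε : 0 < ε) :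
    ∀ l : Fin m, ∀ z : ℤ × ℤ, onGrid N z →
      |uhat l (gridPt h z) - uhhat l z| ≤ (∑ l', K l' + ε) * (a^2 / 8) := by
  classical
  intro l z hz
  set S : ℝ := ∑ l', K l' with hSdef
  have hIooIcc : Set.Ioo (0:ℝ) a ×ˢ Set.Ioo (0:ℝ) a ⊆ Set.Icc (0:ℝ) a ×ˢ Set.Icc (0:ℝ) a :=
    Set.prod_mono Set.Ioo_subset_Icc_self Set.Ioo_subset_Icc_self
  have hmid : ((a/2 : ℝ), (a/2 : ℝ)) ∈ Set.Ioo (0:ℝ) a ×ˢ Set.Ioo (0:ℝ) a := by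
    constructor <;> constructor <;> [skip; skip; skip; skip] <;> simp <;> linarith
  have hK0 : ∀ l', 0 ≤ K l' := fun l' => le_trans (abs_nonneg _) (hK l' _ hmid)
  have hS0 : 0 ≤ S := Finset.sum_nonneg fun l' _ => hK0 l'
  -- the finite grid
  set G : Finset (ℤ × ℤ) := Finset.Icc ((0:ℤ), (0:ℤ)) ((N:ℤ), (N:ℤ)) with hGdef
  have hG : ∀ w : ℤ × ℤ, w ∈ G ↔ onGrid N w := by
    intro w
    simp only [hGdef, Finset.mem_Icc, Prod.le_def, onGrid]
    tauto
  -- the function to maximize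
  set E : Bool × Fin m × (ℤ × ℤ) → ℝ := fun t =>
    (if t.1 then uhat t.2.1 (gridPt h t.2.2) - uhhat t.2.1 t.2.2
     else uhhat t.2.1 t.2.2 - uhat t.2.1 (gridPt h t.2.2)) - (S + ε) * barrier a h t.2.2
    with hEdef
  set s : Finset (Bool × Fin m × (ℤ × ℤ)) := Finset.univ ×ˢ Finset.univ ×ˢ G with hsdef
  have hmem : ∀ t : Bool × Fin m × (ℤ × ℤ), t ∈ s ↔ onGrid N t.2.2 := by
    intro t
    simp only [hsdef, Finset.mem_product, Finset.mem_univ, true_and]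
    exact hG t.2.2
  obtain ⟨t₀, ht₀s, hmaxall⟩ := Finset.exists_max_image s E ⟨(true, l, z), (hmem _).mpr hz⟩
  obtain ⟨σ₀, l₀, z₀⟩ := t₀
  have hongrid₀ : onGrid N z₀ := (hmem _).mp ht₀s
  by_cases hM : E (σ₀, l₀, z₀) ≤ 0
  · -- max nonpositive: conclude
    have h1 : uhat l (gridPt h z) - uhhat l z - (S + ε) * barrier a h z ≤ 0 :=
      le_trans (by simpa [hEdef] using hmaxall (true, l, z) ((hmem _).mpr hz)) hM
    have h2 : uhhat l z - uhat l (gridPt h z) - (S + ε) * barrier a h z ≤ 0 :=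
      le_trans (by simpa [hEdef] using hmaxall (false, l, z) ((hmem _).mpr hz)) hM
    have hb1 : barrier a h z ≤ a^2/8 := barrier_le hh hha hz
    have hc : 0 ≤ S + ε := by linarith
    have : (S + ε) * barrier a h z ≤ (S + ε) * (a^2/8) := mul_le_mul_of_nonneg_left hb1 hc
    rw [abs_le]
    constructor <;> linarith
  · push_neg at hM
    exfalso
    -- the max point is interior
    have hin : inGrid N z₀ := by
      by_contra hni
      have he0 : uhat l₀ (gridPt h z₀) - uhhat l₀ z₀ = 0 := by
        rw [huhat, huhhat, hbdry l₀ z₀ hongrid₀ hni,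
          Finset.sum_congr rfl fun q _ => hbdry q z₀ hongrid₀ hni]
        simp only [gridPt]
        ring
      have hφ : 0 ≤ barrier a h z₀ := barrier_nonneg hh hha hongrid₀
      have : E (σ₀, l₀, z₀) ≤ 0 := by
        rcases σ₀ with _ | _ <;> simp only [hEdef, Bool.false_eq_true, if_true, if_false] <;>
          nlinarith [he0]
      linarith
    have hφ₀ : 0 ≤ barrier a h z₀ := barrier_nonneg hh hha hongrid₀
    have hxIcc : gridPt h z₀ ∈ Set.Icc (0:ℝ) a ×ˢ Set.Icc (0:ℝ) a :=
      gridPt_mem_Icc hh hha hongrid₀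
    rcases σ₀ with _ | _
    · -- σ₀ = false : uhhat - uhat is maximal
      have hEval : E (false, l₀, z₀) = uhhat l₀ z₀ - uhat l₀ (gridPt h z₀)
          - (S + ε) * barrier a h z₀ := by simp [hEdef]
      have hepos : 0 < uhhat l₀ z₀ - uhat l₀ (gridPt h z₀) := by
        have := hM; rw [hEval] at this; nlinarith
      have hmaxf : ∀ (r : Fin m), ∀ w, onGrid N w →
          uhhat r w - uhat r (gridPt h w) - (S + ε) * barrier a h w ≤ E (false, l₀, z₀) :=
        fun r w hw => by simpa [hEdef] using hmaxall (false, r, w) ((hmem _).mpr hw)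
      have hmaxt : ∀ (r : Fin m), ∀ w, onGrid N w →
          uhat r (gridPt h w) - uhhat r w - (S + ε) * barrier a h w ≤ E (false, l₀, z₀) :=
        fun r w hw => by simpa [hEdef] using hmaxall (true, r, w) ((hmem _).mpr hw)
      by_cases huh : 0 < uh l₀ z₀
      · exact coreA' hh hha f hfmono u hC2 hupos huseg uhat huhat hsublap uh huhseg uhhat huhhat
          hdeq K hK hε l₀ z₀ hin huh (by linarith)
          (fun w hw => by have := hmaxf l₀ w hw; rw [hEval] at this; linarith)
      · -- uh l₀ z₀ = 0; find a positive continuous component r and switch to coreA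
        have huhl0 : uh l₀ z₀ = 0 := le_antisymm (not_lt.mp huh) (huhpos l₀ z₀ hongrid₀)
        have huhhat0 : uhhat l₀ z₀ ≤ 0 := by
          rw [huhhat, huhl0]
          have : 0 ≤ ∑ q ∈ Finset.univ.erase l₀, uh q z₀ :=
            Finset.sum_nonneg fun q _ => huhpos q z₀ hongrid₀
          linarith
        have huhatneg : uhat l₀ (gridPt h z₀) < 0 := by linarith
        have hsumpos : 0 < ∑ q ∈ Finset.univ.erase l₀, u q (gridPt h z₀) := by
          rw [huhat] at huhatneg
          linarith [hupos l₀ (gridPt h z₀) hxIcc]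
        obtain ⟨r, hrmem, hrpos⟩ : ∃ r ∈ Finset.univ.erase l₀, 0 < u r (gridPt h z₀) := by
          by_contra hc
          push_neg at hc
          linarith [Finset.sum_nonpos hc]
        have hrne : r ≠ l₀ := Finset.ne_of_mem_erase hrmem
        have hcseg : ∀ q, q ≠ r → u q (gridPt h z₀) = 0 := fun q hq =>
          (mul_eq_zero.mp (huseg q r (gridPt h z₀) hxIcc hq)).resolve_right (ne_of_gt hrpos)
        have hul0 : u l₀ (gridPt h z₀) = 0 := hcseg l₀ (Ne.symm hrne)
        have huhat_r : uhat r (gridPt h z₀) = u r (gridPt h z₀) := by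
          rw [huhat, Finset.sum_eq_zero fun q hq => hcseg q (Finset.ne_of_mem_erase hq), sub_zero]
        have huhat_l : uhat l₀ (gridPt h z₀) = - u r (gridPt h z₀) := by
          rw [huhat, Finset.sum_eq_single_of_mem r hrmem fun q _ hq => hcseg q hq, hul0]
          ring
        have hd1 : 0 ≤ ∑ q ∈ Finset.univ.erase r, uh q z₀ :=
          Finset.sum_nonneg fun q _ => huhpos q z₀ hongrid₀
        have hd2 : uh r z₀ ≤ ∑ q ∈ Finset.univ.erase l₀, uh q z₀ :=
          Finset.single_le_sum (fun q _ => huhpos q z₀ hongrid₀) hrmem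
        have hhatsum : uhhat r z₀ + uhhat l₀ z₀ ≤ 0 := by
          rw [huhhat, huhhat, huhl0]
          linarith
        have hkey : uhhat l₀ z₀ - uhat l₀ (gridPt h z₀) ≤
            uhat r (gridPt h z₀) - uhhat r z₀ := by
          rw [huhat_r, huhat_l]
          linarith
        exact coreA hh hha f hfmono u hC2 hupos huseg uhat huhat heqlap uh huhpos huhseg
          uhhat huhhat hdsub K hK hε r z₀ hin hrpos (by linarith)
          (fun w hw => by have := hmaxt r w hw; rw [hEval] at this; linarith)
    · -- σ₀ = true : uhat - uhhat is maximal
      have hEval : E (true, l₀, z₀) = uhat l₀ (gridPt h z₀) - uhhat l₀ z₀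
          - (S + ε) * barrier a h z₀ := by simp [hEdef]
      have hepos : 0 < uhat l₀ (gridPt h z₀) - uhhat l₀ z₀ := by
        have := hM; rw [hEval] at this; nlinarith
      have hmaxf : ∀ (r : Fin m), ∀ w, onGrid N w →
          uhhat r w - uhat r (gridPt h w) - (S + ε) * barrier a h w ≤ E (true, l₀, z₀) :=
        fun r w hw => by simpa [hEdef] using hmaxall (false, r, w) ((hmem _).mpr hw)
      have hmaxt : ∀ (r : Fin m), ∀ w, onGrid N w →
          uhat r (gridPt h w) - uhhat r w - (S + ε) * barrier a h w ≤ E (true, l₀, z₀) :=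
        fun r w hw => by simpa [hEdef] using hmaxall (true, r, w) ((hmem _).mpr hw)
      by_cases hu : 0 < u l₀ (gridPt h z₀)
      · exact coreA hh hha f hfmono u hC2 hupos huseg uhat huhat heqlap uh huhpos huhseg
          uhhat huhhat hdsub K hK hε l₀ z₀ hin hu (by linarith)
          (fun w hw => by have := hmaxt l₀ w hw; rw [hEval] at this; linarith)
      · -- u l₀ (x₀) = 0 : find positive discrete component r and switch to coreA'
        have hul0 : u l₀ (gridPt h z₀) = 0 :=
          le_antisymm (not_lt.mp hu) (hupos l₀ (gridPt h z₀) hxIcc)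
        have huhat0 : uhat l₀ (gridPt h z₀) ≤ 0 := by
          rw [huhat, hul0]
          have : 0 ≤ ∑ q ∈ Finset.univ.erase l₀, u q (gridPt h z₀) :=
            Finset.sum_nonneg fun q _ => hupos q (gridPt h z₀) hxIcc
          linarith
        have huhhatneg : uhhat l₀ z₀ < 0 := by linarith
        have hsumpos : 0 < ∑ q ∈ Finset.univ.erase l₀, uh q z₀ := by
          rw [huhhat] at huhhatneg
          linarith [huhpos l₀ z₀ hongrid₀]
        obtain ⟨r, hrmem, hrpos⟩ : ∃ r ∈ Finset.univ.erase l₀, 0 < uh r z₀ := by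
          by_contra hc
          push_neg at hc
          linarith [Finset.sum_nonpos hc]
        have hrne : r ≠ l₀ := Finset.ne_of_mem_erase hrmem
        have hdseg : ∀ q, q ≠ r → uh q z₀ = 0 := fun q hq =>
          (mul_eq_zero.mp (huhseg q r z₀ hongrid₀ hq)).resolve_right (ne_of_gt hrpos)
        have huhl0 : uh l₀ z₀ = 0 := hdseg l₀ (Ne.symm hrne)
        have huhhat_r : uhhat r z₀ = uh r z₀ := by
          rw [huhhat, Finset.sum_eq_zero fun q hq => hdseg q (Finset.ne_of_mem_erase hq), sub_zero]
        have huhhat_l : uhhat l₀ z₀ = - uh r z₀ := by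
          rw [huhhat, Finset.sum_eq_single_of_mem r hrmem fun q _ hq => hdseg q hq, huhl0]
          ring
        have hc1 : 0 ≤ ∑ q ∈ Finset.univ.erase r, u q (gridPt h z₀) :=
          Finset.sum_nonneg fun q _ => hupos q (gridPt h z₀) hxIcc
        have hc2 : u r (gridPt h z₀) ≤ ∑ q ∈ Finset.univ.erase l₀, u q (gridPt h z₀) :=
          Finset.single_le_sum (fun q _ => hupos q (gridPt h z₀) hxIcc) hrmem
        have hhatsum : uhat r (gridPt h z₀) + uhat l₀ (gridPt h z₀) ≤ 0 := by
          rw [huhat, huhat, hul0]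
          linarith
        have hkey : uhat l₀ (gridPt h z₀) - uhhat l₀ z₀ ≤
            uhhat r z₀ - uhat r (gridPt h z₀) := by
          rw [huhhat_r, huhhat_l]
          linarith
        exact coreA' hh hha f hfmono u hC2 hupos huseg uhat huhat hsublap uh huhseg uhhat huhhat
          hdeq K hK hε r z₀ hin hrpos (by linarith)
          (fun w hw => by have := hmaxf r w hw; rw [hEval] at this; linarith)

/-- Main error estimate (Proposition 4.1): for a `C²` nonnegative segregated minimizer
family `u` (satisfying `Δû_l ≤ f_l(·,u_l)` on `Ω` and `Δu_l = f_l(·,u_l)` on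
`{u_l > 0}`) and a discrete solution family `u_h` with the same boundary values,
`f_l(z,·)` nondecreasing, one has
`‖u_l - u_h^l‖_{L∞(Ω_h)} ≤ a² ∑_l ‖L_h u_l - Δu_l‖_{L∞(Ω)}`. -/
theorem stmt_16 (m N : ℕ) (hN : 1 ≤ N) (a h : ℝ) (ha : 0 < a) (hh : h = a / N)
    (f : Fin m → ℝ × ℝ → ℝ → ℝ) (hfmono : ∀ l p, Monotone (f l p))
    (u : Fin m → ℝ × ℝ → ℝ) (hC2 : ∀ l, ContDiff ℝ 2 (u l))
    (hupos : ∀ l p, p ∈ Set.Icc (0:ℝ) a ×ˢ Set.Icc (0:ℝ) a → 0 ≤ u l p)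
    (huseg : ∀ p q : Fin m, ∀ x, x ∈ Set.Icc (0:ℝ) a ×ˢ Set.Icc (0:ℝ) a →
      p ≠ q → u p x * u q x = 0)
    (uhat : Fin m → ℝ × ℝ → ℝ)
    (huhat : ∀ l p, uhat l p = u l p - ∑ q ∈ Finset.univ.erase l, u q p)
    (hsublap : ∀ l p, p ∈ Set.Ioo (0:ℝ) a ×ˢ Set.Ioo (0:ℝ) a →
      Lap2 (uhat l) p ≤ f l p (u l p))
    (heqlap : ∀ l p, p ∈ Set.Ioo (0:ℝ) a ×ˢ Set.Ioo (0:ℝ) a → 0 < u l p →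
      Lap2 (u l) p = f l p (u l p))
    (uh : Fin m → ℤ × ℤ → ℝ)
    (huhpos : ∀ l z, onGrid N z → 0 ≤ uh l z)
    (huhseg : ∀ p q : Fin m, ∀ z, onGrid N z → p ≠ q → uh p z * uh q z = 0)
    (hbdry : ∀ l z, onGrid N z → ¬inGrid N z → uh l z = u l (z.1 * h, z.2 * h))
    (uhhat : Fin m → ℤ × ℤ → ℝ)
    (huhhat : ∀ l z, uhhat l z = uh l z - ∑ q ∈ Finset.univ.erase l, uh q z)
    (hdsub : ∀ l z, inGrid N z →
      dLap h (uhhat l) z ≤ f l (z.1 * h, z.2 * h) (uh l z))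
    (hdeq : ∀ l z, inGrid N z → 0 < uh l z →
      dLap h (uhhat l) z = f l (z.1 * h, z.2 * h) (uh l z))
    (K : Fin m → ℝ)
    (hK : ∀ l p, p ∈ Set.Ioo (0:ℝ) a ×ˢ Set.Ioo (0:ℝ) a →
      |LhC h (u l) p - Lap2 (u l) p| ≤ K l) :
    ∀ l : Fin m, ∀ z : ℤ × ℤ, onGrid N z →
      |u l (z.1 * h, z.2 * h) - uh l z| ≤ a ^ 2 * ∑ l', K l' := by
  classical
  intro l z hz
  have hNpos : (0:ℝ) < (N:ℝ) := by
    have : (1:ℝ) ≤ (N:ℝ) := by exact_mod_cast hN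
    linarith
  have hh0 : 0 < h := by rw [hh]; positivity
  have hha : (N:ℝ) * h = a := by rw [hh]; field_simp
  set S : ℝ := ∑ l', K l' with hSdef
  have hmid : ((a/2 : ℝ), (a/2 : ℝ)) ∈ Set.Ioo (0:ℝ) a ×ˢ Set.Ioo (0:ℝ) a := by
    constructor <;> constructor <;> simp <;> linarith
  have hK0 : ∀ l', 0 ≤ K l' := fun l' => le_trans (abs_nonneg _) (hK l' _ hmid)
  have hS0 : 0 ≤ S := Finset.sum_nonneg fun l' _ => hK0 l'
  have hxIcc : gridPt h z ∈ Set.Icc (0:ℝ) a ×ˢ Set.Icc (0:ℝ) a := gridPt_mem_Icc hh0 hha hz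
  -- u = max(uhat, 0) pointwise and same for discrete
  have hmu : u l (gridPt h z) = max (uhat l (gridPt h z)) 0 := by
    rcases (hupos l (gridPt h z) hxIcc).lt_or_eq with hpos | hzero
    · have hcseg : ∀ q ∈ Finset.univ.erase l, u q (gridPt h z) = 0 := fun q hq =>
        (mul_eq_zero.mp (huseg q l (gridPt h z) hxIcc (Finset.ne_of_mem_erase hq))).resolve_right
          (ne_of_gt hpos)
      rw [huhat, Finset.sum_eq_zero hcseg, sub_zero, max_eq_left hpos.le]
    · have : 0 ≤ ∑ q ∈ Finset.univ.erase l, u q (gridPt h z) :=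
        Finset.sum_nonneg fun q _ => hupos q (gridPt h z) hxIcc
      rw [huhat, ← hzero, max_eq_right (by linarith)]
  have hmuh : uh l z = max (uhhat l z) 0 := by
    rcases (huhpos l z hz).lt_or_eq with hpos | hzero
    · have hdseg : ∀ q ∈ Finset.univ.erase l, uh q z = 0 := fun q hq =>
        (mul_eq_zero.mp (huhseg q l z hz (Finset.ne_of_mem_erase hq))).resolve_right
          (ne_of_gt hpos)
      rw [huhhat, Finset.sum_eq_zero hdseg, sub_zero, max_eq_left hpos.le]
    · have : 0 ≤ ∑ q ∈ Finset.univ.erase l, uh q z :=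
        Finset.sum_nonneg fun q _ => huhpos q z hz
      rw [huhhat, ← hzero, max_eq_right (by linarith)]
  have habs : |u l ((z.1 : ℝ) * h, (z.2 : ℝ) * h) - uh l z| ≤
      |uhat l (gridPt h z) - uhhat l z| := by
    show |u l (gridPt h z) - uh l z| ≤ _
    rw [hmu, hmuh]
    exact abs_max_sub_max_le_abs _ _ _
  -- pass to the limit ε → 0 in the key bound
  have hbound : |uhat l (gridPt h z) - uhhat l z| ≤ S * (a^2/8) := by
    by_contra hlt
    push_neg at hlt
    have hc : (0:ℝ) < a^2/8 := by positivity
    set ε : ℝ := (|uhat l (gridPt h z) - uhhat l z| - S*(a^2/8)) / (2*(a^2/8)) with hεdef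
    have hε : 0 < ε := div_pos (by linarith) (by positivity)
    have hkb := keybound ha hh0 hha f hfmono u hC2 hupos huseg uhat huhat hsublap heqlap
      uh huhpos huhseg hbdry uhhat huhhat hdsub hdeq K hK hε l z hz
    have hεc : ε * (a^2/8) = (|uhat l (gridPt h z) - uhhat l z| - S*(a^2/8)) / 2 := by
      rw [hεdef]
      field_simp
    rw [add_mul] at hkb
    linarith
  have hfin : S * (a^2/8) ≤ a^2 * S := by nlinarith [sq_nonneg a]
  calc |u l ((z.1 : ℝ) * h, (z.2 : ℝ) * h) - uh l z|
      ≤ |uhat l (gridPt h z) - uhhat l z| := habs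
    _ ≤ S * (a^2/8) := hbound
    _ ≤ a^2 * S := hfin
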